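/- Let z be a primitive 30th root of unity in ℂ. Then z^5 + z^6 + z^12 + z^18 + z^24 + z^25 = 0, but no nonempty proper sub-multiset of the multiset {z^5, z^6, z^12, z^18, z^24, z^25} has sum 0. Hence there exists a minimal vanishing sum of 30th roots of unity of length 6 that is not a rotation of a full sum over all p-th roots of unity for a single prime p. -/

import Mathlib

open CategoryTheory

/-- `Qcyc N` is the `N`-th cyclotomic field `ℚ(ζ_N)`, realised as the subfield of `ℂ`
generated by all `N`-th roots of unity. -/
noncomputable def Qcyc (N : ℕ) : IntermediateField ℚ ℂ :=
  IntermediateField.adjoin ℚ {z : ℂ | z ^ N = 1}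

/-- `Qadj c` is the subfield `ℚ(c)` of `ℂ` generated by a complex number `c`. -/
noncomputable def Qadj (c : ℂ) : IntermediateField ℚ ℂ :=
  IntermediateField.adjoin ℚ {c}

/-- `f` is the conductor of the complex number `c`: the least positive integer `N`
with `c ∈ ℚ(ζ_N)`. -/
def IsConductorOf (c : ℂ) (f : ℕ) : Prop :=
  IsLeast {N : ℕ | 0 < N ∧ c ∈ Qcyc N} f

/-- `f` is the conductor of the character `χ`: the least positive integer `N` such that all
values of `χ` lie in `ℚ(ζ_N)`. -/
def IsCharConductor {G : Type*} [Monoid G] (χ : G → ℂ) (f : ℕ) : Prop :=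
  IsLeast {N : ℕ | 0 < N ∧ ∀ g, χ g ∈ Qcyc N} f

/-- Property 1.3 of Navarro–Tiep for `(G, χ, p)`: writing the conductor of `χ` as
`f = p ^ a * m` with `p ∤ m` (so that `p ^ a = p ^ (f.factorization p)` is the `p`-part of `f`),
there is a `p`-element `g ∈ G` such that `p ∤ [ℚ(ζ_{p^a}) : ℚ(χ(g))]`. -/
def Property13 {G : Type*} [Group G] (χ : G → ℂ) (p : ℕ) : Prop :=
  ∀ f : ℕ, IsCharConductor χ f →
    ∃ g : G, (∃ j : ℕ, orderOf g = p ^ j) ∧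
      ¬ p ∣ (Qadj (χ g)).relfinrank (Qcyc (p ^ f.factorization p))


section Stmt18Aux
open Polynomial


private lemma indep8 (z : ℂ) (hz : IsPrimitiveRoot z 30)
    (c0 c1 c2 c3 c4 c5 c6 c7 : ℚ)
    (h : (c0:ℂ) + c1*z + c2*z^2 + c3*z^3 + c4*z^4 + c5*z^5 + c6*z^6 + c7*z^7 = 0) :
    c0 = 0 ∧ c1 = 0 ∧ c2 = 0 ∧ c3 = 0 ∧ c4 = 0 ∧ c5 = 0 ∧ c6 = 0 ∧ c7 = 0 := by
  set q : ℚ[X] := C c0 + C c1*X + C c2*X^2 + C c3*X^3 + C c4*X^4 + C c5*X^5 + C c6*X^6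
      + C c7*X^7 with hq
  have haev : aeval z q = 0 := by
    simp only [hq, map_add, map_mul, map_pow, aeval_C, aeval_X]
    push_cast
    simp only [eq_ratCast]
    convert h using 2
  have hdvd : minpoly ℚ z ∣ q := minpoly.dvd ℚ z haev
  have hmd : (minpoly ℚ z).degree = 8 := by
    rw [← cyclotomic_eq_minpoly_rat hz (by norm_num), degree_cyclotomic]
    norm_num
    decide
  have hq0 : q = 0 := by
    by_contra h0
    have h1 := Polynomial.degree_le_of_dvd hdvd h0
    rw [hmd] at h1
    have hd : q.degree ≤ 7 := by rw [hq]; compute_degree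
    exact absurd (le_trans h1 hd) (by norm_num)
  refine ⟨?_, ?_, ?_, ?_, ?_, ?_, ?_, ?_⟩
  · simpa [hq] using congrArg (fun p => p.coeff 0) hq0
  · simpa [hq] using congrArg (fun p => p.coeff 1) hq0
  · simpa [hq] using congrArg (fun p => p.coeff 2) hq0
  · simpa [hq] using congrArg (fun p => p.coeff 3) hq0
  · simpa [hq] using congrArg (fun p => p.coeff 4) hq0
  · simpa [hq] using congrArg (fun p => p.coeff 5) hq0
  · simpa [hq] using congrArg (fun p => p.coeff 6) hq0
  · simpa [hq] using congrArg (fun p => p.coeff 7) hq0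

private lemma key (z : ℂ) (hz : IsPrimitiveRoot z 30) (n1 n2 n3 n4 n5 n6 : ℚ)
    (h : (n1:ℂ)*z^5 + n2*z^6 + n3*z^12 + n4*z^18 + n5*z^24 + n6*z^25 = 0) :
    n1 = n6 ∧ n2 = n6 ∧ n3 = n6 ∧ n4 = n6 ∧ n5 = n6 := by
  have h30 : z^30 = 1 := hz.pow_eq_one
  have h15 : z^15 = -1 := by
    have h1 : (z^15 - 1) * (z^15 + 1) = 0 := by linear_combination h30
    rcases mul_eq_zero.1 h1 with h2 | h2
    · exact absurd (sub_eq_zero.1 h2) (hz.pow_ne_one_of_pos_of_lt (by norm_num) (by norm_num))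
    · exact eq_neg_of_add_eq_zero_left h2
  have h5ne : z^5 + 1 ≠ 0 := by
    intro h'
    have h10 : z^10 = 1 := by linear_combination (z^5 - 1) * h'
    exact hz.pow_ne_one_of_pos_of_lt (by norm_num) (by norm_num) h10
  have hA : z^10 - z^5 + 1 = 0 := by
    have h1 : (z^5 + 1) * (z^10 - z^5 + 1) = 0 := by linear_combination h15
    exact (mul_eq_zero.1 h1).resolve_left h5ne
  have h2ne : z^2 - z + 1 ≠ 0 := by
    intro h'
    have h6 : z^6 = 1 := by linear_combination (z^4 + z^3 - z - 1) * h'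
    exact hz.pow_ne_one_of_pos_of_lt (by norm_num) (by norm_num) h6
  have hΦ : z^8 + z^7 - z^5 - z^4 - z^3 + z + 1 = 0 := by
    have h1 : (z^2 - z + 1) * (z^8 + z^7 - z^5 - z^4 - z^3 + z + 1) = 0 := by
      linear_combination hA
    exact (mul_eq_zero.1 h1).resolve_left h2ne
  obtain ⟨e0, e1, e2, e3, e4, e5, e6, e7⟩ := indep8 z hz (n6-n5) 0 (n5-n3) (n5-n4) 0
    (n1-n6) (n2-n5) (n3-n5) (by
      push_cast
      linear_combination h - (((n5:ℂ)-n6) + (n6-n5)*z + (n3-n6)*z^2 + (n4-n3)*z^3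
        + (n3-n4)*z^4 + n4*z^5 + n4*z^8 + (n5-n4)*z^9 + (n4-n5+n6)*z^10 + (n5-n6)*z^11
        + n6*z^12 + n5*z^14 + (n6-n5)*z^15 + (n5-n6)*z^16 + n6*z^17) * hΦ)
  exact ⟨by linarith, by linarith, by linarith, by linarith, by linarith⟩

private lemma step {x : ℂ} {s t : Multiset ℂ} (h : t ≤ x ::ₘ s) :
    ∃ (n : ℕ) (t' : Multiset ℂ), n ≤ 1 ∧ t' ≤ s ∧
      t.sum = n • x + t'.sum ∧ Multiset.card t = n + Multiset.card t' := by
  by_cases hx : x ∈ t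
  · refine ⟨1, t.erase x, le_refl 1, Multiset.erase_le_iff_le_cons.2 h, ?_, ?_⟩
    · conv_lhs => rw [← Multiset.cons_erase hx]
      simp
    · conv_lhs => rw [← Multiset.cons_erase hx]
      simp
      omega
  · exact ⟨0, t, by norm_num, (Multiset.le_cons_of_notMem hx).1 h, by simp, by simp⟩


end Stmt18Aux

/-- for a primitive 30th root of unity `z`, the multiset
`{z⁵, z⁶, z¹², z¹⁸, z²⁴, z²⁵}` is a vanishing sum of 30th roots of unity with no nonempty
proper vanishing sub-multiset; being of length 6, it is not a rotation of the full sum over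
all `q`-th roots of unity for a single prime `q`. -/
theorem stmt18 (z : ℂ) (hz : IsPrimitiveRoot z 30) :
    z ^ 5 + z ^ 6 + z ^ 12 + z ^ 18 + z ^ 24 + z ^ 25 = 0 ∧
    (∀ t : Multiset ℂ,
      t < ({z ^ 5, z ^ 6, z ^ 12, z ^ 18, z ^ 24, z ^ 25} : Multiset ℂ) → t ≠ 0 →
        t.sum ≠ 0) ∧
    (∀ q : ℕ, q.Prime → ∀ w y : ℂ, IsPrimitiveRoot y q →
      ({z ^ 5, z ^ 6, z ^ 12, z ^ 18, z ^ 24, z ^ 25} : Multiset ℂ) ≠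
        (Multiset.range q).map (fun i => w * y ^ i)) := by
  have h30 : z^30 = 1 := hz.pow_eq_one
  have h6ne : z^6 - 1 ≠ 0 :=
    sub_ne_zero.2 (hz.pow_ne_one_of_pos_of_lt (by norm_num) (by norm_num))
  have hB : z^24 + z^18 + z^12 + z^6 + 1 = 0 := by
    have h1 : (z^6 - 1) * (z^24 + z^18 + z^12 + z^6 + 1) = 0 := by linear_combination h30
    exact (mul_eq_zero.1 h1).resolve_left h6ne
  have h15 : z^15 = -1 := by
    have h1 : (z^15 - 1) * (z^15 + 1) = 0 := by linear_combination h30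
    rcases mul_eq_zero.1 h1 with h2 | h2
    · exact absurd (sub_eq_zero.1 h2) (hz.pow_ne_one_of_pos_of_lt (by norm_num) (by norm_num))
    · exact eq_neg_of_add_eq_zero_left h2
  have h5ne : z^5 + 1 ≠ 0 := by
    intro h'
    have h10 : z^10 = 1 := by linear_combination (z^5 - 1) * h'
    exact hz.pow_ne_one_of_pos_of_lt (by norm_num) (by norm_num) h10
  have hA : z^10 - z^5 + 1 = 0 := by
    have h1 : (z^5 + 1) * (z^10 - z^5 + 1) = 0 := by linear_combination h15
    exact (mul_eq_zero.1 h1).resolve_left h5ne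
  have hC : z^5 + z^25 = 1 := by linear_combination z^25 * hA + (1 - z^5) * h30
  refine ⟨by linear_combination hB + hC, ?_, ?_⟩
  · intro t ht htne hts
    obtain ⟨n1, t1, hn1, h1, hs1, hc1⟩ := step ht.le
    obtain ⟨n2, t2, hn2, h2, hs2, hc2⟩ := step h1
    obtain ⟨n3, t3, hn3, h3, hs3, hc3⟩ := step h2
    obtain ⟨n4, t4, hn4, h4, hs4, hc4⟩ := step h3
    obtain ⟨n5, t5, hn5, h5, hs5, hc5⟩ := step h4
    obtain ⟨n6, t6, hn6, h6, hs6, hc6⟩ := step h5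
    have ht6 : t6 = 0 := Multiset.le_zero.1 h6
    subst ht6
    have hsum : ((n1:ℚ):ℂ)*z^5 + ((n2:ℚ):ℂ)*z^6 + ((n3:ℚ):ℂ)*z^12 + ((n4:ℚ):ℂ)*z^18
        + ((n5:ℚ):ℂ)*z^24 + ((n6:ℚ):ℂ)*z^25 = 0 := by
      rw [hs1, hs2, hs3, hs4, hs5, hs6] at hts
      simp only [nsmul_eq_mul, Multiset.sum_zero] at hts
      push_cast
      linear_combination hts
    obtain ⟨e1, e2, e3, e4, e5⟩ := key z hz _ _ _ _ _ _ hsum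
    have E1 : n1 = n6 := by exact_mod_cast e1
    have E2 : n2 = n6 := by exact_mod_cast e2
    have E3 : n3 = n6 := by exact_mod_cast e3
    have E4 : n4 = n6 := by exact_mod_cast e4
    have E5 : n5 = n6 := by exact_mod_cast e5
    have hcard : Multiset.card t < 6 := by
      have := Multiset.card_lt_card ht
      simpa using this
    have hpos : 0 < Multiset.card t := Multiset.card_pos.2 htne
    rw [hc1, hc2, hc3, hc4, hc5, hc6] at hcard hpos
    simp only [Multiset.card_zero] at hcard hpos
    omega
  · intro q hq w y _ heq
    have hcard : (6:ℕ) = q := by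
      have := congrArg Multiset.card heq
      simpa using this
    rw [← hcard] at hq
    norm_num at hq
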